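/- arXiv:2005.01011 — 3 statements merged into one kernel-verified Lean document; each statement's English description precedes it below -/
import Mathlib

section
/- In the circular sweep process, the number of iterations needed to reduce the evader region to be bounded by a circle of radius at most r is N_n = ⌈ln((2πrV_T - nrV_s)/(2πR_0V_T - nrV_s)) / ln(1 + 2πV_T/(n(V_s+V_T)))⌉, provided V_s > 2πR_0V_T/(nr). -/
open Real

/-- Circular sweep process: under the supercriticality assumption
`V_s > 2πR₀V_T/(nr)`, the number of iterations needed for the bounding radius
(evolving by `R_{i+1} = R_i(1 + 2πV_T/(n(V_s+V_T))) - rV_s/(V_s+V_T)`) to drop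
to at most `r` is
`N_n = ⌈ln((2πrV_T - nrV_s)/(2πR₀V_T - nrV_s)) / ln(1 + 2πV_T/(n(V_s+V_T)))⌉`. -/
theorem stmt_6 (n : ℕ) (hn : 0 < n) (r Vs VT R0 : ℝ)
    (hr : 0 < r) (hVs : 0 < Vs) (hVT : 0 < VT) (hR0r : r < R0)
    (hcrit : Vs > 2 * π * R0 * VT / (n * r))
    (R : ℕ → ℝ) (hR0 : R 0 = R0)
    (hrec : ∀ i, R (i + 1) =
      R i * (1 + 2 * π * VT / (n * (Vs + VT))) - r * Vs / (Vs + VT)) :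
    IsLeast {i : ℕ | R i ≤ r}
      ⌈Real.log ((2 * π * r * VT - n * r * Vs) / (2 * π * R0 * VT - n * r * Vs)) /
        Real.log (1 + 2 * π * VT / (n * (Vs + VT)))⌉₊ := by
  have hπ := Real.pi_pos
  have hn' : (0:ℝ) < n := by exact_mod_cast hn
  have hVsVT : 0 < Vs + VT := by linarith
  set q : ℝ := 1 + 2 * π * VT / (n * (Vs + VT)) with hqdef
  have hq1 : 1 < q := by
    have h : 0 < 2 * π * VT / (n * (Vs + VT)) := by positivity
    rw [hqdef]; linarith
  have hq0 : 0 < q := by linarith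
  set F : ℝ := n * r * Vs / (2 * π * VT) with hFdef
  have hcrit' : 2 * π * R0 * VT < n * r * Vs := by
    have := (div_lt_iff₀ (by positivity : (0:ℝ) < n * r)).mp hcrit
    nlinarith
  have hFR0 : R0 < F := by
    rw [hFdef, lt_div_iff₀ (by positivity)]
    nlinarith
  have hFr : r < F := lt_trans hR0r hFR0
  have hclosed : ∀ i, R i = F - q ^ i * (F - R0) := by
    intro i
    induction i with
    | zero => simp [hR0]
    | succ i ih =>
      rw [hrec i, ih, hqdef, hFdef]
      have h1 : (2 * π * VT : ℝ) ≠ 0 := by positivity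
      have h2 : ((n:ℝ) * (Vs + VT)) ≠ 0 := by positivity
      have h3 : (Vs + VT : ℝ) ≠ 0 := by positivity
      rw [pow_succ]
      generalize (1 + 2 * π * VT / ((n:ℝ) * (Vs + VT))) ^ i = x
      field_simp
      ring
  have hkey : ∀ i : ℕ, R i ≤ r ↔ (F - r) / (F - R0) ≤ q ^ i := by
    intro i
    rw [hclosed i, div_le_iff₀ (by linarith : (0:ℝ) < F - R0)]
    constructor <;> intro h <;> linarith
  have hA0 : 0 < (F - r) / (F - R0) := by
    apply div_pos <;> linarith
  have hlogq : 0 < Real.log q := Real.log_pos hq1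
  have hkey2 : ∀ i : ℕ, (F - r) / (F - R0) ≤ q ^ i ↔
      Real.log ((F - r) / (F - R0)) / Real.log q ≤ (i : ℝ) := by
    intro i
    rw [div_le_iff₀ hlogq, ← Real.log_pow]
    exact (Real.log_le_log_iff hA0 (pow_pos hq0 i)).symm
  have hfrac : (2 * π * r * VT - n * r * Vs) / (2 * π * R0 * VT - n * r * Vs)
      = (F - r) / (F - R0) := by
    have h1 : 2 * π * r * VT - n * r * Vs = -(2 * π * VT) * (F - r) := by
      rw [hFdef]; field_simp; ring
    have h2 : 2 * π * R0 * VT - n * r * Vs = -(2 * π * VT) * (F - R0) := by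
      rw [hFdef]; field_simp; ring
    rw [h1, h2, mul_div_mul_left _ _ (neg_ne_zero.mpr (by positivity : (2 * π * VT : ℝ) ≠ 0))]
  rw [hfrac]
  constructor
  · show R _ ≤ r
    rw [hkey, hkey2]
    exact Nat.le_ceil _
  · intro i hi
    rw [Set.mem_setOf_eq, hkey, hkey2] at hi
    exact Nat.ceil_le.mpr hi
end

section
/- The spiral critical velocity, defined as the V_s solving (R_0 - r)(e^{2πV_T/(n√(V_s²-V_T²))} - 1) = 2rV_s/(V_s+V_T), exists and is unique in (V_T, ∞) when R_0 > r > 0 and V_T > 0. -/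
open Real Filter Topology Set

/-- The spiral critical velocity exists and is unique: there is exactly one
`V_s > V_T` solving
`(R₀ - r)(e^{2πV_T/(n√(V_s²-V_T²))} - 1) = 2rV_s/(V_s + V_T)`. -/
theorem stmt_13 (n : ℕ) (hn : 0 < n) (VT R0 r : ℝ)
    (hVT : 0 < VT) (hr : 0 < r) (hR0 : r < R0) :
    ∃! Vs : ℝ, Vs > VT ∧
      (R0 - r) *
          (Real.exp (2 * π * VT / (n * Real.sqrt (Vs ^ 2 - VT ^ 2))) - 1) =
        2 * r * Vs / (Vs + VT) := by
  have hπ : (0:ℝ) < π := Real.pi_pos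
  have hc : (0:ℝ) < 2 * π * VT := by positivity
  have hn' : (0:ℝ) < (n:ℝ) := by exact_mod_cast hn
  have hR : 0 < R0 - r := sub_pos.mpr hR0
  set g : ℝ → ℝ := fun Vs =>
    (R0 - r) * (Real.exp (2 * π * VT / (n * Real.sqrt (Vs ^ 2 - VT ^ 2))) - 1) with hgdef
  set h : ℝ → ℝ := fun Vs => 2 * r * Vs / (Vs + VT) with hhdef
  set F : ℝ → ℝ := fun Vs => g Vs - h Vs with hFdef
  -- strict antitonicity of g on (VT, ∞)
  have mono_g : ∀ ⦃x y : ℝ⦄, VT < x → x < y → g y < g x := by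
    intro x y hx hxy
    have hx0 : 0 < x := hVT.trans hx
    have h2 : 0 < x ^ 2 - VT ^ 2 := by nlinarith
    have h1 : x ^ 2 - VT ^ 2 < y ^ 2 - VT ^ 2 := by nlinarith
    have hs : Real.sqrt (x ^ 2 - VT ^ 2) < Real.sqrt (y ^ 2 - VT ^ 2) :=
      Real.sqrt_lt_sqrt h2.le h1
    have hsx : 0 < Real.sqrt (x ^ 2 - VT ^ 2) := Real.sqrt_pos.mpr h2
    have hd : 2 * π * VT / (n * Real.sqrt (y ^ 2 - VT ^ 2)) <
        2 * π * VT / (n * Real.sqrt (x ^ 2 - VT ^ 2)) := by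
      apply div_lt_div_of_pos_left hc (by positivity)
      exact mul_lt_mul_of_pos_left hs hn'
    simp only [hgdef]
    have := Real.exp_lt_exp.mpr hd
    nlinarith
  -- strict monotonicity of h on (VT, ∞)
  have mono_h : ∀ ⦃x y : ℝ⦄, VT < x → x < y → h x < h y := by
    intro x y hx hxy
    have hx0 : 0 < x := hVT.trans hx
    simp only [hhdef]
    have hy0 : 0 < y := hx0.trans hxy
    rw [div_lt_div_iff₀ (by positivity) (by positivity)]
    nlinarith [mul_pos (mul_pos hr hVT) (sub_pos.mpr hxy)]
  -- bound on h
  have h_le : ∀ x : ℝ, VT < x → h x ≤ 2 * r := by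
    intro x hx
    have hx0 : 0 < x := hVT.trans hx
    simp only [hhdef]
    rw [div_le_iff₀ (by positivity)]
    nlinarith
  -- F tends to atTop as Vs → VT⁺
  have scont : Continuous fun Vs : ℝ => Real.sqrt (Vs ^ 2 - VT ^ 2) :=
    ((continuous_pow 2).sub continuous_const).sqrt
  have tend_s : Tendsto (fun Vs : ℝ => Real.sqrt (Vs ^ 2 - VT ^ 2)) (𝓝[>] VT) (𝓝[>] 0) := by
    apply tendsto_nhdsWithin_of_tendsto_nhds_of_eventually_within
    · have := scont.tendsto VT
      simpa using this.mono_left nhdsWithin_le_nhds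
    · filter_upwards [self_mem_nhdsWithin] with x hx
      have hx0 : 0 < x := hVT.trans hx
      exact Real.sqrt_pos.mpr (by nlinarith [hx.out])
  have tend_F_top : Tendsto F (𝓝[>] VT) atTop := by
    have t1 : Tendsto (fun Vs : ℝ => (Real.sqrt (Vs ^ 2 - VT ^ 2))⁻¹) (𝓝[>] VT) atTop :=
      tendsto_inv_nhdsGT_zero.comp tend_s
    have t2 : Tendsto (fun Vs : ℝ => 2 * π * VT / (n * Real.sqrt (Vs ^ 2 - VT ^ 2)))
        (𝓝[>] VT) atTop := by
      have := t1.const_mul_atTop (show (0:ℝ) < 2 * π * VT / n by positivity)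
      refine this.congr fun x => ?_
      rw [div_eq_mul_inv, div_eq_mul_inv, mul_inv]
      ring
    have t3 : Tendsto g (𝓝[>] VT) atTop := by
      have := (tendsto_atTop_add_const_right _ (-1) (Real.tendsto_exp_atTop.comp t2)).const_mul_atTop hR
      refine this.congr fun x => ?_
      simp [hgdef, sub_eq_add_neg, Function.comp]
    refine tendsto_atTop_mono' _ ?_ (tendsto_atTop_add_const_right _ (-(2*r)) t3)
    filter_upwards [self_mem_nhdsWithin] with x hx
    have := h_le x hx
    simp only [hFdef]
    linarith
  -- F tends to -2r as Vs → ∞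
  have tend_F_bot : Tendsto F atTop (𝓝 (0 - 2 * r)) := by
    have t1 : Tendsto (fun Vs : ℝ => Vs ^ 2 - VT ^ 2) atTop atTop := by
      have := tendsto_atTop_add_const_right atTop (-VT ^ 2)
        (tendsto_pow_atTop (two_ne_zero))
      simpa [sub_eq_add_neg] using this
    have tsq : Tendsto Real.sqrt atTop atTop := by
      refine (tendsto_rpow_atTop (by norm_num : (0:ℝ) < 1/2)).congr fun x => ?_
      rw [Real.sqrt_eq_rpow]
    have t2 : Tendsto (fun Vs : ℝ => (n:ℝ) * Real.sqrt (Vs ^ 2 - VT ^ 2)) atTop atTop :=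
      (tsq.comp t1).const_mul_atTop hn'
    have t3 : Tendsto (fun Vs : ℝ => 2 * π * VT / (n * Real.sqrt (Vs ^ 2 - VT ^ 2)))
        atTop (𝓝 0) := tendsto_const_nhds.div_atTop t2
    have t4 : Tendsto g atTop (𝓝 0) := by
      have := ((Real.continuous_exp.tendsto 0).comp t3).sub (tendsto_const_nhds (x := (1:ℝ)))
      have t5 := this.const_mul (R0 - r)
      simpa [hgdef, Function.comp, Real.exp_zero] using t5
    have t6 : Tendsto h atTop (𝓝 (2 * r)) := by
      have ta : Tendsto (fun Vs : ℝ => 2 * r - 2 * r * VT / (Vs + VT)) atTop (𝓝 (2 * r - 0)) :=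
        tendsto_const_nhds.sub
          (tendsto_const_nhds.div_atTop (tendsto_atTop_add_const_right _ VT tendsto_id))
      rw [sub_zero] at ta
      refine Tendsto.congr' ?_ ta
      filter_upwards [eventually_gt_atTop 0] with x hx
      have hx0 : x + VT ≠ 0 := by positivity
      simp only [hhdef]
      field_simp
      ring
    exact t4.sub t6
  -- find a with F a > 0
  obtain ⟨a, haF, haVT⟩ := ((tend_F_top.eventually (eventually_gt_atTop 0)).and
    self_mem_nhdsWithin).exists
  -- find b > a with F b < 0
  have hneg : (0:ℝ) - 2 * r < 0 := by linarith
  obtain ⟨b, hbF, hba⟩ := ((tend_F_bot.eventually_lt_const hneg).and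
    (eventually_gt_atTop a)).exists
  have hbF' : F b < 0 := hbF
  have haVT' : VT < a := haVT
  have hbVT : VT < b := haVT'.trans hba
  -- continuity of F on [a, b]
  have hcF : ContinuousOn F (Icc a b) := by
    have hne : ∀ x ∈ Icc a b, (n:ℝ) * Real.sqrt (x ^ 2 - VT ^ 2) ≠ 0 := by
      intro x hx
      have hVTx : VT < x := haVT'.trans_le hx.1
      have hx0 : 0 < x := hVT.trans hVTx
      have : 0 < Real.sqrt (x ^ 2 - VT ^ 2) := Real.sqrt_pos.mpr (by nlinarith)
      positivity
    have hne2 : ∀ x ∈ Icc a b, x + VT ≠ 0 := by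
      intro x hx
      have hVTx : VT < x := haVT'.trans_le hx.1
      have hx0 : 0 < x := hVT.trans hVTx
      positivity
    apply ContinuousOn.sub
    · exact continuousOn_const.mul
        (((continuousOn_const.div (continuousOn_const.mul scont.continuousOn) hne).rexp).sub
          continuousOn_const)
    · exact (continuousOn_const.mul continuousOn_id).div
        (continuousOn_id.add continuousOn_const) hne2
  have hab : a ≤ b := hba.le
  have hmem : (0:ℝ) ∈ Icc (F b) (F a) := ⟨hbF'.le, haF.le⟩
  obtain ⟨c, hcmem, hFc⟩ := intermediate_value_Icc' hab hcF hmem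
  have hcVT : VT < c := haVT'.trans_le hcmem.1
  refine ⟨c, ⟨hcVT, ?_⟩, ?_⟩
  · have : g c = h c := by
      have : g c - h c = 0 := hFc
      linarith
    simpa [hgdef, hhdef] using this
  · rintro y ⟨hyVT, hy⟩
    have hyg : g y = h y := by simpa [hgdef, hhdef] using hy
    have hcg : g c = h c := by
      have : g c - h c = 0 := hFc
      linarith
    rcases lt_trichotomy y c with hlt | heq | hgt
    · have h1 := mono_g hyVT hlt
      have h2 := mono_h hyVT hlt
      linarith
    · exact heq
    · have h1 := mono_g hcVT hgt
      have h2 := mono_h hcVT hgt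
      linarith
end

section
/- In the spiral sweep process with V_s above the spiral critical velocity, the number of iterations to reduce the evader region to a disk of radius at most 2r is N_n = ⌈ln(r(3 - E)/(R_0(1-E) + r(1+E)))/ln((V_T + V_s·E)/(V_s+V_T))⌉ where E = e^{2πV_T/(n√(V_s²-V_T²))}. -/
open Real

lemma aux_least (c A : ℝ) (hc : 1 < c) (hA : 1 < A) :
    IsLeast {i : ℕ | A ≤ c ^ i} ⌈Real.log A / Real.log c⌉₊ := by
  have hlogc : 0 < Real.log c := Real.log_pos hc
  have hA0 : 0 < A := lt_trans one_pos hA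
  constructor
  · show A ≤ c ^ _
    have h1 : Real.log A / Real.log c ≤ (⌈Real.log A / Real.log c⌉₊ : ℝ) := Nat.le_ceil _
    have h2 : Real.log A ≤ (⌈Real.log A / Real.log c⌉₊ : ℝ) * Real.log c := by
      rw [div_le_iff₀ hlogc] at h1; exact h1
    have h3 : Real.log A ≤ Real.log (c ^ ⌈Real.log A / Real.log c⌉₊) := by
      rw [Real.log_pow]; exact h2
    exact (Real.log_le_log_iff hA0 (pow_pos (lt_trans one_pos hc) _)).mp h3
  · intro i hi
    have hi' : A ≤ c ^ i := hi
    have h3 : Real.log A ≤ (i : ℝ) * Real.log c := by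
      have := Real.log_le_log hA0 hi'
      rwa [Real.log_pow] at this
    exact Nat.ceil_le.mpr ((div_le_iff₀ hlogc).mpr h3)

/-- Spiral sweep process: with `E = e^{2πV_T/(n√(V_s²-V_T²))}` and `V_s` above the
spiral critical velocity (so that the spread during one sweep satisfies
`(R₀ - r)(E - 1) < 2r`, i.e. `R̃₀` lies below the repelling fixed point), the number
of iterations needed to reduce the evader region to a disk of radius at most `2r` is
`N_n = ⌈ln(r(3-E)/(R₀(1-E)+r(1+E))) / ln((V_T+V_s E)/(V_s+V_T))⌉`. -/
theorem stmt_16 (n : ℕ) (hn : 0 < n) (Vs VT R0 r : ℝ)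
    (hVT : 0 < VT) (hVs : VT < Vs) (hr : 0 < r) (hR0 : 2 * r < R0)
    (E : ℝ) (hE : E = Real.exp (2 * π * VT / (n * Real.sqrt (Vs ^ 2 - VT ^ 2))))
    (hcrit : (R0 - r) * (E - 1) < 2 * r * Vs / (Vs + VT))
    (R : ℕ → ℝ) (hR0' : R 0 = R0)
    (hrec : ∀ i, R (i + 1) - r =
      (R i - r) * ((VT + Vs * E) / (Vs + VT)) - 2 * r * Vs / (Vs + VT)) :
    IsLeast {i : ℕ | R i ≤ 2 * r}
      ⌈Real.log (r * (3 - E) / (R0 * (1 - E) + r * (1 + E))) /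
        Real.log ((VT + Vs * E) / (Vs + VT))⌉₊ := by
  have hVs0 : 0 < Vs := lt_trans hVT hVs
  have hsum : 0 < Vs + VT := by linarith
  -- E > 1
  have hsq : 0 < Vs ^ 2 - VT ^ 2 := by nlinarith
  have hE1 : 1 < E := by
    rw [hE]
    have hpos : 0 < 2 * π * VT / (n * Real.sqrt (Vs ^ 2 - VT ^ 2)) := by
      apply div_pos
      · positivity
      · have := Real.sqrt_pos.mpr hsq
        have hn' : (0 : ℝ) < n := by exact_mod_cast hn
        positivity
    have := Real.add_one_lt_exp (ne_of_gt hpos)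
    linarith
  set c : ℝ := (VT + Vs * E) / (Vs + VT) with hc_def
  have hc : 1 < c := by
    rw [hc_def, lt_div_iff₀ hsum]
    nlinarith
  set p : ℝ := 2 * r / (E - 1) with hp_def
  have hE1' : 0 < E - 1 := by linarith
  -- R0 - r < p
  have hd : 2 * r * Vs / (Vs + VT) < 2 * r := by
    rw [div_lt_iff₀ hsum]; nlinarith
  have hlt : R0 - r < p := by
    rw [hp_def, lt_div_iff₀ hE1']
    calc (R0 - r) * (E - 1) < 2 * r * Vs / (Vs + VT) := hcrit
    _ < 2 * r := hd
  have hrR0 : r < R0 - r := by linarith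
  -- closed form
  have hclosed : ∀ i, R i - r - p = c ^ i * (R0 - r - p) := by
    intro i
    induction i with
    | zero => simp [hR0']
    | succ k ih =>
      have h1 := hrec k
      have hpc : p * (c - 1) = 2 * r * Vs / (Vs + VT) := by
        rw [hp_def, hc_def]
        field_simp
        ring
      have : R (k + 1) - r - p = c * (R k - r - p) := by
        rw [h1, ← hpc]; ring
      rw [this, ih, pow_succ]; ring
  set A : ℝ := (p - r) / (p - (R0 - r)) with hA_def
  have hden : 0 < p - (R0 - r) := by linarith
  have hA1 : 1 < A := by
    rw [hA_def, lt_div_iff₀ hden]; linarith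
  -- set equality
  have hset : {i : ℕ | R i ≤ 2 * r} = {i : ℕ | A ≤ c ^ i} := by
    ext i
    simp only [Set.mem_setOf_eq]
    have h1 := hclosed i
    constructor
    · intro h
      rw [hA_def, div_le_iff₀ hden]
      nlinarith [h1]
    · intro h
      rw [hA_def, div_le_iff₀ hden] at h
      nlinarith [h1]
  -- argument equality
  have hargeq : r * (3 - E) / (R0 * (1 - E) + r * (1 + E)) = A := by
    have hdenom : R0 * (1 - E) + r * (1 + E) = (E - 1) * (p - (R0 - r)) := by
      rw [hp_def]; field_simp; ring
    rw [hA_def, hdenom, hp_def]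
    rw [div_eq_div_iff (by positivity) (by positivity)]
    field_simp
    try ring
    try exact Or.inl trivial
  rw [hset, hargeq]
  exact aux_least c A hc hA1
end
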